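/- Let G = (V_L ∪ V_R, E) be a bipartite α-expander for some α ∈ (0,1) with maximum degree at most Δ ≥ 1, and let λ ∈ ℝ satisfy λ ≥ (e·Δ²/0.8)^{1/α}. Consider the left hard-core polymer model on G. Then for every vertex v ∈ V_L, ∑_{polymers S with v ∈ S} e^{0.2·|S|} · λ^{|S|}/(1+λ)^{|N_G(S)|} ≤ 1; that is, each clique Λ_v = {polymers S : v ∈ S} satisfies the clique truncation condition for g(x) = e^{0.2x} and bound B = 1. -/

import Mathlib

open scoped Classical

/-- `nbhd G S` is the set `N_G(S)` of all vertices adjacent to some vertex of `S`. -/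
noncomputable def nbhd {V : Type*} [Fintype V] (G : SimpleGraph V) (S : Finset V) :
    Finset V :=
  Finset.univ.filter fun v => ∃ u ∈ S, G.Adj u v

/-- `G` is bipartite with parts `VL` and `VR`. -/
def IsBipartition {V : Type*} [Fintype V] (G : SimpleGraph V) (VL VR : Finset V) : Prop :=
  Disjoint VL VR ∧ VL ∪ VR = Finset.univ ∧
    ∀ u v, G.Adj u v → (u ∈ VL ∧ v ∈ VR) ∨ (u ∈ VR ∧ v ∈ VL)

/-- `G` is a bipartite `α`-expander with parts `VL` and `VR`: every subset `S` of one
side with `|S| ≤ |V_i|/2` satisfies `|N_G(S)| ≥ (1+α)|S|`. -/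
def IsBipartiteExpander {V : Type*} [Fintype V] (G : SimpleGraph V) (VL VR : Finset V)
    (α : ℝ) : Prop :=
  IsBipartition G VL VR ∧
    (∀ S ⊆ VL, (S.card : ℝ) ≤ (VL.card : ℝ) / 2 →
      (1 + α) * (S.card : ℝ) ≤ ((nbhd G S).card : ℝ)) ∧
    (∀ S ⊆ VR, (S.card : ℝ) ≤ (VR.card : ℝ) / 2 →
      (1 + α) * (S.card : ℝ) ≤ ((nbhd G S).card : ℝ))

/-- The square `G²` of a graph: two distinct vertices are adjacent iff their distance
in `G` is at most `2`. -/
def graphSquare {V : Type*} (G : SimpleGraph V) : SimpleGraph V where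
  Adj u v := u ≠ v ∧ (G.Adj u v ∨ ∃ w, G.Adj u w ∧ G.Adj w v)
  symm := ⟨by
    intro u v h
    refine ⟨h.1.symm, ?_⟩
    rcases h.2 with h' | ⟨w, hw1, hw2⟩
    · exact Or.inl h'.symm
    · exact Or.inr ⟨w, hw2.symm, hw1.symm⟩⟩
  loopless := ⟨fun u h => h.1 rfl⟩

/-- A polymer of the left hard-core polymer model: a nonempty subset of `VL` with
`|S| ≤ |VL|/2` inducing a connected subgraph of `G²`. -/
def IsHCPolymer {V : Type*} [Fintype V] (G : SimpleGraph V) (VL : Finset V)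
    (S : Finset V) : Prop :=
  S.Nonempty ∧ S ⊆ VL ∧ (S.card : ℝ) ≤ (VL.card : ℝ) / 2 ∧
    ((graphSquare G).induce (↑S : Set V)).Connected

/-- The weight `w_S = λ^{|S|}/(1+λ)^{|N_G(S)|}` of a polymer `S`. -/
noncomputable def hcWeight {V : Type*} [Fintype V] (G : SimpleGraph V) (lam : ℝ)
    (S : Finset V) : ℝ :=
  lam ^ S.card / (1 + lam) ^ (nbhd G S).card

/-- Two polymers are incompatible iff some vertex of one is at distance at most `2`
in `G` from some vertex of the other. -/
def HCIncomp {V : Type*} (G : SimpleGraph V) (S S' : Finset V) : Prop :=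
  ∃ u ∈ S, ∃ v ∈ S', u = v ∨ (graphSquare G).Adj u v

/-! ### Auxiliary development: reachability inside a finite vertex set -/

/-- An auxiliary linear order on a fintype, used for canonical choices. -/
noncomputable def auxOrd (V : Type*) [Fintype V] : LinearOrder V :=
  LinearOrder.lift' (Fintype.equivFin V) (Fintype.equivFin V).injective

section Aux

attribute [local instance] auxOrd

open Finset

set_option linter.unusedSectionVars false

variable {V : Type*} [Fintype V]

/-- One step of a walk inside `S`. -/
def stepIn (H : SimpleGraph V) (S : Finset V) (a b : V) : Prop :=
  H.Adj a b ∧ a ∈ S ∧ b ∈ S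

/-- Reachability inside `S`. -/
def ReachIn (H : SimpleGraph V) (S : Finset V) : V → V → Prop :=
  Relation.ReflTransGen (stepIn H S)

/-- `S` induces a connected subgraph of `H`, as a pairwise reachability condition. -/
def ConnIn (H : SimpleGraph V) (S : Finset V) : Prop :=
  ∀ a ∈ S, ∀ b ∈ S, ReachIn H S a b

lemma stepIn_symm {H : SimpleGraph V} {S : Finset V} : Symmetric (stepIn H S) :=
  fun _ _ h => ⟨h.1.symm, h.2.2, h.2.1⟩

lemma ReachIn.symm {H : SimpleGraph V} {S : Finset V} {a b : V}
    (h : ReachIn H S a b) : ReachIn H S b a :=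
  (@Relation.ReflTransGen.stdSymm _ (stepIn H S) ⟨fun _ _ h => stepIn_symm h⟩).symm _ _ h

lemma ReachIn.trans {H : SimpleGraph V} {S : Finset V} {a b c : V}
    (h : ReachIn H S a b) (h' : ReachIn H S b c) : ReachIn H S a c :=
  Relation.ReflTransGen.trans h h'

/-- The connected component of `w` inside `S`. -/
noncomputable def compIn (H : SimpleGraph V) (S : Finset V) (w : V) : Finset V :=
  S.filter (fun y => ReachIn H S w y)

lemma compIn_subset {H : SimpleGraph V} {S : Finset V} {w : V} : compIn H S w ⊆ S :=
  filter_subset _ _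

lemma mem_compIn_self {H : SimpleGraph V} {S : Finset V} {w : V} (hw : w ∈ S) :
    w ∈ compIn H S w := mem_filter.2 ⟨hw, Relation.ReflTransGen.refl⟩

lemma mem_compIn {H : SimpleGraph V} {S : Finset V} {w y : V} :
    y ∈ compIn H S w ↔ y ∈ S ∧ ReachIn H S w y := mem_filter

lemma compIn_eq_of_reach {H : SimpleGraph V} {S : Finset V} {w w' : V}
    (h : ReachIn H S w w') : compIn H S w = compIn H S w' := by
  ext y
  simp only [mem_compIn]
  exact ⟨fun hy => ⟨hy.1, h.symm.trans hy.2⟩, fun hy => ⟨hy.1, h.trans hy.2⟩⟩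

lemma reach_compIn {H : SimpleGraph V} {S : Finset V} {w y : V}
    (h : ReachIn H S w y) : ReachIn H (compIn H S w) w y := by
  induction h with
  | refl => exact Relation.ReflTransGen.refl
  | tail hb hstep ih =>
      rename_i b c
      refine ih.tail ⟨hstep.1, ?_, ?_⟩
      · exact mem_compIn.2 ⟨hstep.2.1, hb⟩
      · exact mem_compIn.2 ⟨hstep.2.2, hb.tail hstep⟩

lemma connIn_compIn {H : SimpleGraph V} {S : Finset V} (w : V) :
    ConnIn H (compIn H S w) := by
  intro a ha b hb
  rcases mem_compIn.1 ha with ⟨-, hra⟩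
  rcases mem_compIn.1 hb with ⟨-, hrb⟩
  exact (reach_compIn hra).symm.trans (reach_compIn hrb)

/-- Every component of `S.erase u` contains a neighbor of `u`, when `S ∋ u` is
connected. -/
lemma exists_adj_in_comp {H : SimpleGraph V} {S : Finset V} {u a : V}
    (hconn : ConnIn H S) (hu : u ∈ S) (ha : a ∈ S.erase u) :
    ∃ b ∈ compIn H (S.erase u) a, H.Adj u b := by
  have hreach : ReachIn H S a u := hconn a (mem_of_mem_erase ha) u hu
  clear hconn
  induction hreach using Relation.ReflTransGen.head_induction_on with
  | refl => exact absurd rfl (ne_of_mem_erase ha)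
  | head hstep htail ih =>
      rename_i p c
      by_cases hc : c = u
      · subst hc
        exact ⟨p, mem_compIn_self ha, hstep.1.symm⟩
      · have hcS : c ∈ S.erase u := mem_erase.2 ⟨hc, hstep.2.2⟩
        rcases ih hcS with ⟨b, hb, hadj⟩
        refine ⟨b, ?_, hadj⟩
        rcases mem_compIn.1 hb with ⟨hbS, hrb⟩
        have hpc : ReachIn H (S.erase u) p c :=
          Relation.ReflTransGen.single ⟨hstep.1, ha, hcS⟩
        exact mem_compIn.2 ⟨hbS, hpc.trans hrb⟩

/-- The set of connected subsets containing `u` of size at most `k`. -/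
noncomputable def polySet (H : SimpleGraph V) (u : V) (k : ℕ) : Finset (Finset V) :=
  univ.filter fun S : Finset V => u ∈ S ∧ ConnIn H S ∧ S.card ≤ k

lemma mem_polySet {H : SimpleGraph V} {u : V} {k : ℕ} {S : Finset V} :
    S ∈ polySet H u k ↔ u ∈ S ∧ ConnIn H S ∧ S.card ≤ k := by
  unfold polySet
  rw [mem_filter]
  simp only [mem_univ, true_and]

/-- Encoding map: assigns to each vertex `w` the component of `S.erase u` whose
least `H`-neighbor of `u` is `w`, if any. -/
noncomputable def enc (H : SimpleGraph V) (u : V) (S : Finset V) (w : V) : Finset V :=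
  if w ∈ H.neighborFinset u ∧ w ∈ S.erase u ∧
      (∀ y ∈ compIn H (S.erase u) w ∩ H.neighborFinset u, w ≤ y)
    then compIn H (S.erase u) w else ∅

lemma enc_subset {H : SimpleGraph V} {u : V} {S : Finset V} (w : V) :
    enc H u S w ⊆ S.erase u := by
  unfold enc
  split
  · exact compIn_subset
  · exact empty_subset _

lemma enc_biUnion {H : SimpleGraph V} {u : V} {S : Finset V}
    (hconn : ConnIn H S) (hu : u ∈ S) :
    univ.biUnion (enc H u S) = S.erase u := by
  apply Finset.Subset.antisymm
  · exact biUnion_subset.2 fun w _ => enc_subset w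
  · intro a ha
    rcases exists_adj_in_comp hconn hu ha with ⟨b, hb, hadj⟩
    have hbN : b ∈ H.neighborFinset u := (H.mem_neighborFinset u b).2 hadj
    have hne : (compIn H (S.erase u) a ∩ H.neighborFinset u).Nonempty :=
      ⟨b, mem_inter.2 ⟨hb, hbN⟩⟩
    set w₀ := (compIn H (S.erase u) a ∩ H.neighborFinset u).min' hne with hw₀
    have hw₀mem := (compIn H (S.erase u) a ∩ H.neighborFinset u).min'_mem hne
    rw [mem_inter] at hw₀mem
    rcases mem_compIn.1 hw₀mem.1 with ⟨hw₀S, hw₀r⟩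
    have hcompeq : compIn H (S.erase u) w₀ = compIn H (S.erase u) a :=
      (compIn_eq_of_reach hw₀r).symm
    refine mem_biUnion.2 ⟨w₀, mem_univ _, ?_⟩
    have hcond : w₀ ∈ H.neighborFinset u ∧ w₀ ∈ S.erase u ∧
        (∀ y ∈ compIn H (S.erase u) w₀ ∩ H.neighborFinset u, w₀ ≤ y) := by
      refine ⟨hw₀mem.2, hw₀S, ?_⟩
      intro y hy
      rw [hcompeq] at hy
      exact min'_le _ _ hy
    rw [enc, if_pos hcond, hcompeq]
    exact mem_compIn_self ha

lemma enc_disjoint {H : SimpleGraph V} {u : V} {S : Finset V} {w w' : V}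
    (hne : w ≠ w') : Disjoint (enc H u S w) (enc H u S w') := by
  unfold enc
  split
  · rename_i hc
    split
    · rename_i hc'
      rw [Finset.disjoint_left]
      intro y hy hy'
      rcases mem_compIn.1 hy with ⟨-, hr⟩
      rcases mem_compIn.1 hy' with ⟨-, hr'⟩
      have hww' : ReachIn H (S.erase u) w w' := hr.trans hr'.symm
      have h1 : w' ∈ compIn H (S.erase u) w ∩ H.neighborFinset u :=
        mem_inter.2 ⟨mem_compIn.2 ⟨hc'.2.1, hww'⟩, hc'.1⟩
      have h2 : w ∈ compIn H (S.erase u) w' ∩ H.neighborFinset u :=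
        mem_inter.2 ⟨mem_compIn.2 ⟨hc.2.1, hww'.symm⟩, hc.1⟩
      exact hne (le_antisymm (hc.2.2 _ h1) (hc'.2.2 _ h2))
    · exact disjoint_empty_right _
  · exact disjoint_empty_left _

lemma enc_card {H : SimpleGraph V} {u : V} {S : Finset V}
    (hconn : ConnIn H S) (hu : u ∈ S) :
    S.card = 1 + ∑ w : V, (enc H u S w).card := by
  have h1 : (univ.biUnion (enc H u S)).card = ∑ w : V, (enc H u S w).card :=
    card_biUnion (fun x _ y _ hxy => enc_disjoint hxy)
  rw [← card_erase_add_one hu, ← enc_biUnion hconn hu, h1, add_comm]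

lemma enc_mem_polySet {H : SimpleGraph V} {u : V} {S : Finset V} {w : V} {k : ℕ}
    (hcard : S.card ≤ k + 1) (hu : u ∈ S) (hw : (enc H u S w).Nonempty) :
    enc H u S w ∈ polySet H w k := by
  have hcard' : (enc H u S w).card ≤ k := by
    calc (enc H u S w).card ≤ (S.erase u).card := card_le_card (enc_subset w)
    _ = S.card - 1 := card_erase_of_mem hu
    _ ≤ k := by omega
  by_cases hc : w ∈ H.neighborFinset u ∧ w ∈ S.erase u ∧
      (∀ y ∈ compIn H (S.erase u) w ∩ H.neighborFinset u, w ≤ y)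
  · refine mem_filter.2 ⟨mem_univ _, ?_, ?_, hcard'⟩
    · rw [enc, if_pos hc]; exact mem_compIn_self hc.2.1
    · rw [enc, if_pos hc]; exact connIn_compIn w
  · rw [enc, if_neg hc] at hw
    exact absurd hw (by simp)

/-- **Key counting lemma**: the tree recursion bound for connected-set generating
functions in a bounded-degree graph. -/
lemma key_count (H : SimpleGraph V) (D : ℕ)
    (hdeg : ∀ u : V, (H.neighborFinset u).card ≤ D)
    (x T : ℝ) (hx : 0 ≤ x) (hT : 0 ≤ T) (hfix : x * (1 + T) ^ D ≤ T) :
    ∀ (k : ℕ) (u : V), ∑ S ∈ polySet H u k, x ^ S.card ≤ T := by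
  intro k
  induction k with
  | zero =>
      intro u
      have : polySet H u 0 = ∅ := by
        apply Finset.eq_empty_of_forall_notMem
        intro S hS
        rcases mem_filter.1 hS with ⟨-, huS, -, hc⟩
        exact absurd (card_pos.2 ⟨u, huS⟩) (by omega)
      rw [this, sum_empty]; exact hT
  | succ k ih =>
      intro u
      set N := H.neighborFinset u with hN
      set t : V → Finset (Finset V) := fun w =>
        if w ∈ N then insert ∅ (polySet H w k) else {∅} with ht
      have hmem : ∀ S ∈ polySet H u (k+1), enc H u S ∈ Fintype.piFinset t := by
        intro S hS
        rcases mem_filter.1 hS with ⟨-, huS, hconn, hcard⟩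
        rw [Fintype.mem_piFinset]
        intro w
        by_cases hwN : w ∈ N
        · rw [ht]; simp only [if_pos hwN]
          rcases (enc H u S w).eq_empty_or_nonempty with he | hne
          · rw [he]; exact mem_insert_self _ _
          · exact mem_insert_of_mem (enc_mem_polySet hcard huS hne)
        · rw [ht]; simp only [if_neg hwN]
          have : enc H u S w = ∅ := by
            rw [enc, if_neg]
            intro hcc
            exact hwN hcc.1
          rw [this]; exact mem_singleton_self _
      have hinj : ∀ S ∈ polySet H u (k+1), ∀ S' ∈ polySet H u (k+1),
          enc H u S = enc H u S' → S = S' := by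
        intro S hS S' hS' he
        rcases mem_filter.1 hS with ⟨-, huS, hconn, -⟩
        rcases mem_filter.1 hS' with ⟨-, huS', hconn', -⟩
        have h1 : S = insert u (univ.biUnion (enc H u S)) := by
          rw [enc_biUnion hconn huS, insert_erase huS]
        have h2 : S' = insert u (univ.biUnion (enc H u S')) := by
          rw [enc_biUnion hconn' huS', insert_erase huS']
        rw [h1, h2, he]
      calc ∑ S ∈ polySet H u (k+1), x ^ S.card
          = ∑ S ∈ polySet H u (k+1), x * ∏ w : V, x ^ (enc H u S w).card := by
            apply sum_congr rfl
            intro S hS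
            rcases mem_filter.1 hS with ⟨-, huS, hconn, -⟩
            rw [Finset.prod_pow_eq_pow_sum, enc_card hconn huS, pow_add, pow_one]
        _ = x * ∑ S ∈ polySet H u (k+1), ∏ w : V, x ^ (enc H u S w).card := by
            rw [mul_sum]
        _ = x * ∑ g ∈ (polySet H u (k+1)).image (enc H u), ∏ w : V, x ^ (g w).card := by
            rw [sum_image hinj]
        _ ≤ x * ∑ g ∈ Fintype.piFinset t, ∏ w : V, x ^ (g w).card := by
            apply mul_le_mul_of_nonneg_left _ hx
            apply sum_le_sum_of_subset_of_nonneg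
            · intro g hg
              rcases mem_image.1 hg with ⟨S, hS, rfl⟩
              exact hmem S hS
            · intro g _ _
              exact prod_nonneg fun w _ => pow_nonneg hx _
        _ = x * ∏ w : V, ∑ A ∈ t w, x ^ A.card := by
            rw [Finset.prod_univ_sum]
        _ ≤ x * (1 + T) ^ D := by
            apply mul_le_mul_of_nonneg_left _ hx
            have hfac : ∀ w : V, w ∉ N → ∑ A ∈ t w, x ^ A.card = 1 := by
              intro w hw
              rw [ht]; simp only [if_neg hw]
              simp
            have h1 : ∏ w : V, ∑ A ∈ t w, x ^ A.card
                = ∏ w ∈ N, ∑ A ∈ t w, x ^ A.card :=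
              (prod_subset (subset_univ N) (fun w _ hw => hfac w hw)).symm
            rw [h1]
            calc ∏ w ∈ N, ∑ A ∈ t w, x ^ A.card
                ≤ ∏ w ∈ N, (1 + T) := by
                  apply prod_le_prod
                  · intro w _
                    exact sum_nonneg fun A _ => pow_nonneg hx _
                  · intro w hw
                    rw [ht]; simp only [if_pos hw]
                    have hnotmem : (∅ : Finset V) ∉ polySet H w k := by
                      intro hcc
                      rcases mem_filter.1 hcc with ⟨-, hc', -⟩
                      exact absurd hc' (notMem_empty w)
                    rw [sum_insert hnotmem, card_empty, pow_zero]
                    linarith [ih w]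
              _ = (1 + T) ^ N.card := by rw [prod_const]
              _ ≤ (1 + T) ^ D := pow_le_pow_right₀ (by linarith) (hdeg u)
        _ ≤ T := hfix

lemma reachIn_of_walk {H : SimpleGraph V} {S : Finset V}
    {a b : (↑(↑S : Set V) : Type _)} (p : (H.induce (↑S : Set V)).Walk a b) :
    ReachIn H S a.1 b.1 := by
  induction p with
  | nil => exact Relation.ReflTransGen.refl
  | cons h p ih =>
      rename_i c d e
      exact Relation.ReflTransGen.head ⟨h, Finset.mem_coe.1 c.2, Finset.mem_coe.1 d.2⟩ ih

lemma connIn_of_induce_connected {H : SimpleGraph V} {S : Finset V}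
    (h : (H.induce (↑S : Set V)).Connected) : ConnIn H S := by
  intro a ha b hb
  have hr : (H.induce (↑S : Set V)).Reachable ⟨a, Finset.mem_coe.2 ha⟩
      ⟨b, Finset.mem_coe.2 hb⟩ := h.preconnected _ _
  obtain ⟨p⟩ := hr
  exact reachIn_of_walk p

lemma nbhd_singleton (G : SimpleGraph V) (v : V) :
    nbhd G {v} = G.neighborFinset v := by
  ext w
  simp [nbhd, SimpleGraph.mem_neighborFinset]

lemma sq_degree_bound (G : SimpleGraph V) (Δ : ℕ) (hΔ : 1 ≤ Δ)
    (hdeg : ∀ v : V, (G.neighborFinset v).card ≤ Δ) (u : V) :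
    ((graphSquare G).neighborFinset u).card ≤ Δ ^ 2 := by
  have hsub : (graphSquare G).neighborFinset u ⊆
      G.neighborFinset u ∪ (G.neighborFinset u).biUnion
        (fun w => (G.neighborFinset w).erase u) := by
    intro y hy
    rw [SimpleGraph.mem_neighborFinset] at hy
    obtain ⟨hne, h | ⟨w, hw1, hw2⟩⟩ : u ≠ y ∧ (G.Adj u y ∨ ∃ w, G.Adj u w ∧ G.Adj w y) := hy
    · exact mem_union_left _ ((G.mem_neighborFinset u y).2 h)
    · refine mem_union_right _ (mem_biUnion.2 ⟨w, (G.mem_neighborFinset u w).2 hw1, ?_⟩)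
      exact mem_erase.2 ⟨hne.symm, (G.mem_neighborFinset w y).2 hw2⟩
  calc ((graphSquare G).neighborFinset u).card
      ≤ (G.neighborFinset u ∪ (G.neighborFinset u).biUnion
          (fun w => (G.neighborFinset w).erase u)).card := card_le_card hsub
    _ ≤ (G.neighborFinset u).card + ((G.neighborFinset u).biUnion
          (fun w => (G.neighborFinset w).erase u)).card := card_union_le _ _
    _ ≤ Δ + ∑ w ∈ G.neighborFinset u, ((G.neighborFinset w).erase u).card :=
        Nat.add_le_add (hdeg u) (card_biUnion_le)
    _ ≤ Δ + ∑ w ∈ G.neighborFinset u, (Δ - 1) := by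
        apply Nat.add_le_add_left
        apply Finset.sum_le_sum
        intro w hw
        have hu : u ∈ G.neighborFinset w :=
          (G.mem_neighborFinset w u).2 ((G.mem_neighborFinset u w).1 hw).symm
        rw [card_erase_of_mem hu]
        exact Nat.sub_le_sub_right (hdeg w) 1
    _ = Δ + (G.neighborFinset u).card * (Δ - 1) := by rw [Finset.sum_const, smul_eq_mul]
    _ ≤ Δ + Δ * (Δ - 1) :=
        Nat.add_le_add_left (Nat.mul_le_mul_right _ (hdeg u)) _
    _ ≤ Δ ^ 2 := by
        obtain ⟨d, rfl⟩ : ∃ d, Δ = d + 1 := ⟨Δ - 1, by omega⟩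
        have : d + 1 - 1 = d := rfl
        rw [this]
        ring_nf
        omega

lemma weight_bound (lam α : ℝ) (hlam : 1 ≤ lam) (hα : 0 < α)
    (b : ℝ) (hb : 0 < b) (hlb : b ≤ lam ^ α)
    (k n : ℕ) (hn : (1 + α) * k ≤ (n : ℝ)) :
    lam ^ k / (1 + lam) ^ n ≤ (1 / b) ^ k := by
  have hlam0 : (0:ℝ) < lam := by linarith
  have h2 : lam ^ ((1+α) * (k:ℝ)) ≤ (1+lam) ^ ((1+α)*(k:ℝ)) :=
    Real.rpow_le_rpow hlam0.le (by linarith) (by positivity)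
  have h3 : ((1:ℝ)+lam) ^ ((1+α)*(k:ℝ)) ≤ (1+lam) ^ (n:ℝ) :=
    Real.rpow_le_rpow_of_exponent_le (by linarith) hn
  have hpos : (0:ℝ) < lam ^ ((1+α)*(k:ℝ)) := Real.rpow_pos_of_pos hlam0 _
  have h4 : lam ^ k / (1+lam)^n ≤ lam ^ (k:ℝ) / lam ^ ((1+α)*(k:ℝ)) := by
    rw [← Real.rpow_natCast lam k, ← Real.rpow_natCast (1+lam) n]
    gcongr
    all_goals first
      | positivity
      | exact h2.trans h3
      | exact Real.rpow_nonneg hlam0.le _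
  have h5 : lam ^ (k:ℝ) / lam ^ ((1+α)*(k:ℝ)) = (lam ^ α) ^ (-(k:ℝ)) := by
    rw [← Real.rpow_sub hlam0, ← Real.rpow_mul hlam0.le]
    congr 1
    ring
  have h6 : (lam ^ α) ^ (-(k:ℝ)) = ((lam ^ α) ^ k)⁻¹ := by
    rw [Real.rpow_neg (Real.rpow_nonneg hlam0.le _), Real.rpow_natCast]
  have h7 : ((lam ^ α) ^ k)⁻¹ ≤ (b ^ k)⁻¹ := by
    apply inv_anti₀ (by positivity)
    exact pow_le_pow_left₀ hb.le hlb k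
  calc lam ^ k / (1+lam)^n ≤ lam ^ (k:ℝ) / lam ^ ((1+α)*(k:ℝ)) := h4
    _ = ((lam ^ α) ^ k)⁻¹ := by rw [h5, h6]
    _ ≤ (b ^ k)⁻¹ := h7
    _ = (1/b) ^ k := by rw [one_div, inv_pow]

lemma fixed_point (Δ : ℕ) (hΔ : 1 ≤ Δ) :
    (Real.exp 0.2 / (Real.exp 1 * (Δ:ℝ)^2 / 0.8)) *
      (1 + 0.8/(Δ:ℝ)^2) ^ (Δ^2) ≤ 0.8/(Δ:ℝ)^2 := by
  have hΔ0 : (0:ℝ) < (Δ:ℝ)^2 := by positivity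
  have h1 : (1 + 0.8/(Δ:ℝ)^2) ^ (Δ^2) ≤ Real.exp 0.8 := by
    calc (1 + 0.8/(Δ:ℝ)^2) ^ (Δ^2) ≤ (Real.exp (0.8/(Δ:ℝ)^2)) ^ (Δ^2) := by
          apply pow_le_pow_left₀ (by positivity)
          linarith [Real.add_one_le_exp (0.8/(Δ:ℝ)^2)]
      _ = Real.exp ((Δ^2 : ℕ) * (0.8/(Δ:ℝ)^2)) := (Real.exp_nat_mul _ _).symm
      _ = Real.exp 0.8 := by
          congr 1
          push_cast
          field_simp
  have hx0 : (0:ℝ) ≤ Real.exp 0.2 / (Real.exp 1 * (Δ:ℝ)^2 / 0.8) := by positivity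
  calc (Real.exp 0.2 / (Real.exp 1 * (Δ:ℝ)^2 / 0.8)) * (1 + 0.8/(Δ:ℝ)^2) ^ (Δ^2)
      ≤ (Real.exp 0.2 / (Real.exp 1 * (Δ:ℝ)^2 / 0.8)) * Real.exp 0.8 :=
        mul_le_mul_of_nonneg_left h1 hx0
    _ = 0.8/(Δ:ℝ)^2 := by
        rw [div_mul_eq_mul_div, ← Real.exp_add]
        norm_num
        rw [div_eq_div_iff (by positivity) (by positivity)]
        ring

end Aux

/-- For the left hard-core polymer model on a bipartite `α`-expander
of maximum degree at most `Δ` with `λ ≥ (eΔ²/0.8)^{1/α}`, every clique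
`Λ_v = {S : v ∈ S}` satisfies the clique truncation condition for `g(x) = e^{0.2x}`
and `B = 1`: for every `v ∈ V_L`, `∑_{S ∋ v} e^{0.2|S|} w_S ≤ 1`. -/
theorem hardcore_clique_truncation_condition {V : Type*} [Fintype V] (G : SimpleGraph V)
    (VL VR : Finset V) (α : ℝ) (hα : α ∈ Set.Ioo (0 : ℝ) 1)
    (hexp : IsBipartiteExpander G VL VR α)
    (Δ : ℕ) (hΔ : 1 ≤ Δ) (hdeg : ∀ v : V, (nbhd G {v}).card ≤ Δ)
    (lam : ℝ) (hlam : (Real.exp 1 * (Δ : ℝ) ^ 2 / 0.8) ^ (α⁻¹) ≤ lam)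
    (v : V) (hv : v ∈ VL) :
    (∑ S ∈ Finset.univ.filter fun S => IsHCPolymer G VL S ∧ v ∈ S,
        Real.exp (0.2 * (S.card : ℝ)) * hcWeight G lam S) ≤ 1 := by
  obtain ⟨hα0, hα1⟩ := hα
  obtain ⟨hbip, hexpL, -⟩ := hexp
  set b : ℝ := Real.exp 1 * (Δ : ℝ) ^ 2 / 0.8 with hbdef
  have hΔR : (1:ℝ) ≤ (Δ:ℝ) := by exact_mod_cast hΔ
  have he1 : (1:ℝ) ≤ Real.exp 1 := Real.one_le_exp zero_le_one
  have hb1 : (1:ℝ) ≤ b := by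
    rw [hbdef, le_div_iff₀ (by norm_num : (0:ℝ) < 0.8)]
    nlinarith
  have hb0 : (0:ℝ) < b := lt_of_lt_of_le one_pos hb1
  -- λ ≥ 1
  have hlam1 : (1:ℝ) ≤ lam := by
    refine le_trans ?_ hlam
    calc (1:ℝ) = b ^ (0:ℝ) := (Real.rpow_zero b).symm
      _ ≤ b ^ (α⁻¹) := Real.rpow_le_rpow_of_exponent_le hb1 (by positivity)
  have hlam0 : (0:ℝ) < lam := lt_of_lt_of_le one_pos hlam1
  -- λ^α ≥ b
  have hlamα : b ≤ lam ^ α := by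
    have h1 : (b ^ (α⁻¹)) ^ α ≤ lam ^ α :=
      Real.rpow_le_rpow (Real.rpow_nonneg hb0.le _) hlam hα0.le
    rwa [← Real.rpow_mul hb0.le, inv_mul_cancel₀ (ne_of_gt hα0), Real.rpow_one] at h1
  set x : ℝ := Real.exp 0.2 / b with hxdef
  set T : ℝ := 0.8 / (Δ:ℝ)^2 with hTdef
  have hx0 : (0:ℝ) ≤ x := by positivity
  have hT0 : (0:ℝ) ≤ T := by positivity
  -- degree bound for the square graph
  have hdegG : ∀ w : V, (G.neighborFinset w).card ≤ Δ := by
    intro w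
    rw [← nbhd_singleton]
    exact hdeg w
  have hdegH : ∀ u : V, ((graphSquare G).neighborFinset u).card ≤ Δ ^ 2 :=
    sq_degree_bound G Δ hΔ hdegG
  have hfix : x * (1 + T) ^ (Δ^2) ≤ T := by
    rw [hxdef, hTdef, hbdef]
    exact fixed_point Δ hΔ
  -- termwise bound
  have hterm : ∀ S : Finset V, IsHCPolymer G VL S → v ∈ S →
      Real.exp (0.2 * (S.card : ℝ)) * hcWeight G lam S ≤ x ^ S.card := by
    intro S hpoly hvS
    obtain ⟨hSne, hSVL, hShalf, hSconn⟩ := hpoly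
    have hnb : (1 + α) * (S.card : ℝ) ≤ ((nbhd G S).card : ℝ) := hexpL S hSVL hShalf
    have hw : hcWeight G lam S ≤ (1/b) ^ S.card :=
      weight_bound lam α hlam1 hα0 b hb0 hlamα S.card (nbhd G S).card hnb
    calc Real.exp (0.2 * (S.card : ℝ)) * hcWeight G lam S
        ≤ Real.exp (0.2 * (S.card : ℝ)) * (1/b) ^ S.card :=
          mul_le_mul_of_nonneg_left hw (Real.exp_nonneg _)
      _ = x ^ S.card := by
          rw [mul_comm (0.2 : ℝ), Real.exp_nat_mul, ← mul_pow, hxdef]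
          congr 1
          ring
  refine le_trans (Finset.sum_le_sum (g := fun S => x ^ S.card) fun S hS => ?_) ?_
  · rcases Finset.mem_filter.1 hS with ⟨-, hpoly, hvS⟩
    exact hterm S hpoly hvS
  · refine le_trans (Finset.sum_le_sum_of_subset_of_nonneg
      (t := polySet (graphSquare G) v (Fintype.card V)) ?_
      (fun S _ _ => pow_nonneg hx0 S.card)) ?_
    · -- the polymer family is contained in polySet
      intro S hS
      rcases Finset.mem_filter.1 hS with ⟨-, ⟨hSne, hSVL, hShalf, hSconn⟩, hvS⟩
      refine mem_polySet.2 ⟨hvS, connIn_of_induce_connected hSconn, ?_⟩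
      simpa using Finset.card_le_card (Finset.subset_univ S)
    · refine le_trans
        (key_count (graphSquare G) (Δ^2) hdegH x T hx0 hT0 hfix (Fintype.card V) v) ?_
      rw [hTdef, div_le_one (by positivity)]
      nlinarith
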